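/- Let R be a commutative ℂ-algebra, let f, φ₁, …, φ_k ∈ R and set I = (φ₁,…,φ_k). Let Der(R) be the R-module of ℂ-linear derivations of R, let N ⊆ R^{k+1} be the image of the R-linear map Der(R) → R^{k+1} given by δ ↦ (δ(f), δ(φ₁), …, δ(φ_k)), and assume that φ₁, …, φ_k is a regular sequence on R^{k+1}/N. Set Θ := {ξ ∈ Der(R) : ξ(φᵢ) ∈ I for all i} and Θ^T := {η ∈ Der(R) : η(φ₁) = ⋯ = η(φ_k) = 0} + I·Der(R) (so Θ^T ⊆ Θ). Then the evaluation map ξ ↦ ξ(f) induces an isomorphism of R-modules Θ/Θ^T ≅ E(Θ)/E(Θ^T), where E(Θ) = {ξ(f) : ξ ∈ Θ} and E(Θ^T) = {ξ(f) : ξ ∈ Θ^T} are the corresponding R-submodules of R. -/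

import Mathlib

/-- Evaluation of a `ℂ`-linear derivation of `R` at an element `x : R`,
as an `R`-linear map `Der(R) → R`. -/
def derEval (R : Type) [CommRing R] [Algebra ℂ R] (x : R) :
    Derivation ℂ R R →ₗ[R] R where
  toFun δ := δ x
  map_add' _ _ := rfl
  map_smul' _ _ := rfl



open RingTheory.Sequence Submodule

variable {R : Type} [CommRing R]

lemma antisym_double_sum_eq_zero {M : Type} [AddCommGroup M] [Module R M] {k : ℕ}
    (φ : Fin k → R) (w : Fin k → Fin k → M)
    (ha : ∀ j l, w l j = - w j l) (hd : ∀ j, w j j = 0) :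
    ∑ j : Fin k, ∑ l : Fin k, φ j • φ l • w j l = 0 := by
  rw [← Finset.sum_product']
  refine Finset.sum_ninvolution Prod.swap ?_ ?_ (fun _ => Finset.mem_univ _) (fun _ => rfl)
  · rintro ⟨j, l⟩
    simp only [Prod.swap]
    rw [ha j l, smul_comm (φ l) (φ j), smul_neg, smul_neg, add_neg_cancel]
  · rintro ⟨j, l⟩ h hswap
    apply h
    have hjl : j = l := (Prod.mk.injEq .. ▸ congrArg id hswap.symm : _ ∧ _).1
    subst hjl
    simp [hd]

/-- First syzygies of a weakly regular sequence are generated by the Koszul relations: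
any relation `∑ φ j • m j = 0` has antisymmetric coefficients. -/
lemma koszul_syzygy : ∀ (k : ℕ) {M : Type} [AddCommGroup M] [Module R M] (φ : Fin k → R),
    IsWeaklyRegular M (List.ofFn φ) →
    ∀ m : Fin k → M, ∑ j, φ j • m j = 0 →
    ∃ w : Fin k → Fin k → M, (∀ j l, w l j = - w j l) ∧ (∀ j, w j j = 0) ∧
      ∀ j, m j = ∑ l, φ l • w j l := by
  intro k
  induction k with
  | zero =>
    intro M _ _ φ _ m _
    exact ⟨fun _ _ => 0, fun j => j.elim0, fun j => j.elim0, fun j => j.elim0⟩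
  | succ k ih =>
    intro M _ _ φ hreg m hm
    rw [List.ofFn_succ, isWeaklyRegular_cons_iff] at hreg
    obtain ⟨h0, htail⟩ := hreg
    set Q := QuotSMulTop (φ 0) M with hQ
    set π : M →ₗ[R] Q := Submodule.mkQ _ with hπ
    have hm' : ∑ j : Fin k, φ j.succ • m j.succ = -(φ 0 • m 0) := by
      have hs : ∑ j : Fin (k+1), φ j • m j = φ 0 • m 0 + ∑ j : Fin k, φ j.succ • m j.succ :=
        Fin.sum_univ_succ _
      rw [hs] at hm; linear_combination (norm := abel) hm
    have hrel : ∑ j : Fin k, (φ j.succ) • (π (m j.succ)) = 0 := by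
      calc ∑ j : Fin k, (φ j.succ) • (π (m j.succ))
          = π (∑ j : Fin k, φ j.succ • m j.succ) := by rw [map_sum]; simp
        _ = π (-(φ 0 • m 0)) := by rw [hm']
        _ = 0 := by
            rw [map_neg, neg_eq_zero, hπ, Submodule.mkQ_apply, Submodule.Quotient.mk_eq_zero]
            exact Submodule.smul_mem_pointwise_smul _ _ _ Submodule.mem_top
    obtain ⟨w', ha', hd', hw'⟩ := ih (fun i => φ i.succ) htail (fun j => π (m j.succ)) hrel
    have lift : ∀ q : Q, ∃ x : M, π x = q := Submodule.mkQ_surjective _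
    set W : Fin k → Fin k → M := fun j l =>
      if j < l then (lift (w' j l)).choose
      else if l < j then -((lift (w' l j)).choose) else 0 with hW
    have hWa : ∀ j l, W l j = - W j l := by
      intro j l
      rcases lt_trichotomy j l with h | rfl | h
      · rw [hW]; simp only
        rw [if_neg (not_lt.2 h.le), if_pos h, if_pos h]
      · simp [hW]
      · rw [hW]; simp only
        rw [if_pos h, if_neg (not_lt.2 h.le), if_pos h, neg_neg]
    have hWd : ∀ j, W j j = 0 := by intro j; simp [hW]
    have hWπ : ∀ j l, π (W j l) = w' j l := by
      intro j l
      rcases lt_trichotomy j l with h | rfl | h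
      · rw [hW]; simp only
        rw [if_pos h]; exact (lift (w' j l)).choose_spec
      · simp [hW, hd']
      · rw [hW]; simp only
        rw [if_neg (not_lt.2 h.le), if_pos h, map_neg, (lift (w' l j)).choose_spec, ha', neg_neg]
    have hv : ∀ j : Fin k, ∃ v : M, φ 0 • v = m j.succ - ∑ l : Fin k, φ l.succ • W j l := by
      intro j
      have hz : π (m j.succ - ∑ l : Fin k, φ l.succ • W j l) = 0 := by
        rw [map_sub, map_sum]
        simp only [map_smul, hWπ]
        rw [hw' j]; abel
      rw [hπ, Submodule.mkQ_apply, Submodule.Quotient.mk_eq_zero, ← SetLike.mem_coe,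
        Submodule.coe_pointwise_smul] at hz
      obtain ⟨x, -, hx⟩ := Set.mem_smul_set.mp hz
      exact ⟨x, hx⟩
    choose v hvspec using hv
    have hm0 : m 0 = -∑ j : Fin k, φ j.succ • v j := by
      have expand : ∑ j : Fin k, φ j.succ • m j.succ
          = ∑ j : Fin k, φ j.succ • (φ 0 • v j) + ∑ j : Fin k, ∑ l : Fin k,
              φ j.succ • φ l.succ • W j l := by
        rw [← Finset.sum_add_distrib]
        refine Finset.sum_congr rfl fun j _ => ?_
        rw [← Finset.smul_sum, ← smul_add]
        congr 1
        rw [hvspec j]; abel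
      rw [antisym_double_sum_eq_zero (fun i => φ i.succ) W hWa hWd, add_zero, hm'] at expand
      refine h0 ?_
      show φ 0 • m 0 = φ 0 • -∑ j : Fin k, φ j.succ • v j
      rw [smul_neg, Finset.smul_sum]
      have hc : ∑ j : Fin k, φ 0 • φ j.succ • v j = ∑ j : Fin k, φ j.succ • φ 0 • v j :=
        Finset.sum_congr rfl fun j _ => smul_comm _ _ _
      rw [hc, ← expand, neg_neg]
    refine ⟨Fin.cons (Fin.cons 0 (fun l => -(v l))) (fun j => Fin.cons (v j) (W j)),
      ?_, ?_, ?_⟩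
    · intro j l
      induction j using Fin.cases with
      | zero =>
        induction l using Fin.cases with
        | zero => simp
        | succ l' => simp
      | succ j' =>
        induction l using Fin.cases with
        | zero => simp
        | succ l' => simpa using hWa j' l'
    · intro j
      induction j using Fin.cases with
      | zero => simp
      | succ j' => simpa using hWd j'
    · intro j
      induction j using Fin.cases with
      | zero =>
        rw [Fin.sum_univ_succ]
        simp only [Fin.cons_zero, Fin.cons_succ, smul_zero, zero_add]
        rw [hm0, ← Finset.sum_neg_distrib]
        exact Finset.sum_congr rfl fun l _ => (smul_neg _ _).symm
      | succ j' =>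
        rw [Fin.sum_univ_succ]
        simp only [Fin.cons_zero, Fin.cons_succ]
        have h := hvspec j'
        rw [eq_sub_iff_add_eq] at h
        rw [h]

/-- Lifting an antisymmetric matrix along a surjective linear map,
keeping antisymmetry and the zero diagonal. -/
lemma exists_antisym_lift {M Q : Type} [AddCommGroup M] [Module R M]
    [AddCommGroup Q] [Module R Q] (π : M →ₗ[R] Q) (hsurj : Function.Surjective π)
    {k : ℕ} (w' : Fin k → Fin k → Q)
    (ha' : ∀ j l, w' l j = - w' j l) (hd' : ∀ j, w' j j = 0) :
    ∃ W : Fin k → Fin k → M, (∀ j l, W l j = - W j l) ∧ (∀ j, W j j = 0) ∧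
      ∀ j l, π (W j l) = w' j l := by
  set W : Fin k → Fin k → M := fun j l =>
    if j < l then (hsurj (w' j l)).choose
    else if l < j then -((hsurj (w' l j)).choose) else 0 with hW
  refine ⟨W, ?_, ?_, ?_⟩
  · intro j l
    rcases lt_trichotomy j l with h | rfl | h
    · rw [hW]; simp only
      rw [if_neg (not_lt.2 h.le), if_pos h, if_pos h]
    · simp [hW]
    · rw [hW]; simp only
      rw [if_pos h, if_neg (not_lt.2 h.le), if_pos h, neg_neg]
  · intro j; simp [hW]
  · intro j l
    rcases lt_trichotomy j l with h | rfl | h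
    · rw [hW]; simp only
      rw [if_pos h]; exact (hsurj (w' j l)).choose_spec
    · simp [hW, hd']
    · rw [hW]; simp only
      rw [if_neg (not_lt.2 h.le), if_pos h, map_neg, (hsurj (w' l j)).choose_spec, ha', neg_neg]


/-- The crux: a logarithmic derivation annihilating `f` is a trivial logarithmic derivation. -/
lemma crux (R : Type) [CommRing R] [Algebra ℂ R] (k : ℕ) (f : R) (φ : Fin k → R)
    (hreg : IsWeaklyRegular
      ((Fin (k + 1) → R) ⧸ LinearMap.range
        (LinearMap.pi fun i => derEval R ((Fin.cons f φ : Fin (k + 1) → R) i)))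
      (List.ofFn φ))
    (ζ : Derivation ℂ R R) (hf : ζ f = 0)
    (hφ : ∀ i, ζ (φ i) ∈ Ideal.span (Set.range φ)) :
    ζ ∈ (⨅ i, LinearMap.ker (derEval R (φ i))) ⊔
      (Ideal.span (Set.range φ)) • (⊤ : Submodule R (Derivation ℂ R R)) := by
  classical
  set Φ : Derivation ℂ R R →ₗ[R] (Fin (k + 1) → R) :=
    LinearMap.pi fun i => derEval R ((Fin.cons f φ : Fin (k + 1) → R) i) with hΦ
  set N := LinearMap.range Φ with hNdef
  set π := N.mkQ with hπ
  -- coefficients for ζ (φ i)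
  have ha : ∀ i, ∃ a : Fin k → R, ∑ j, a j * φ j = ζ (φ i) :=
    fun i => (Ideal.mem_span_range_iff_exists_fun).mp (hφ i)
  choose a haspec using ha
  set v : Fin k → (Fin (k + 1) → R) := fun j => Fin.cons 0 (fun i => a i j) with hv
  have hΦapp : ∀ (ξ : Derivation ℂ R R) idx, Φ ξ idx = ξ ((Fin.cons f φ : Fin (k + 1) → R) idx) := fun ξ idx => rfl
  have hsum : ∑ j, φ j • v j = Φ ζ := by
    funext idx
    rw [Finset.sum_apply]
    induction idx using Fin.cases with
    | zero =>
      have : ∀ j, (φ j • v j) 0 = 0 := by intro j; simp [hv]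
      simp only [this, Finset.sum_const_zero]
      rw [hΦapp, Fin.cons_zero, hf]
    | succ i =>
      rw [hΦapp, Fin.cons_succ, ← haspec i]
      refine Finset.sum_congr rfl fun j _ => ?_
      simp [hv, mul_comm]
  have hrel : ∑ j, φ j • (π (v j)) = 0 := by
    have : ∑ j, φ j • (π (v j)) = π (∑ j, φ j • v j) := by rw [map_sum]; simp
    rw [this, hsum, hπ, Submodule.mkQ_apply, Submodule.Quotient.mk_eq_zero]
    exact ⟨ζ, rfl⟩
  obtain ⟨w', ha', hd', hw'⟩ := koszul_syzygy k φ hreg (fun j => π (v j)) hrel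
  obtain ⟨W, hWa, hWd, hWπ⟩ :=
    exists_antisym_lift π (Submodule.mkQ_surjective N) w' ha' hd'
  -- each defect lies in N, i.e. comes from a derivation
  have hδ : ∀ j, ∃ δ : Derivation ℂ R R, Φ δ = v j - ∑ l, φ l • W j l := by
    intro j
    have hz : π (v j - ∑ l, φ l • W j l) = 0 := by
      rw [map_sub, map_sum]
      simp only [map_smul, hWπ]
      rw [hw' j]; abel
    rw [hπ, Submodule.mkQ_apply, Submodule.Quotient.mk_eq_zero] at hz
    exact hz
  choose δ hδspec using hδ
  set η : Derivation ℂ R R := ∑ j, φ j • δ j with hη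
  have hηmem : η ∈ (Ideal.span (Set.range φ)) • (⊤ : Submodule R (Derivation ℂ R R)) :=
    Submodule.sum_mem _ fun j _ =>
      Submodule.smul_mem_smul (Ideal.subset_span ⟨j, rfl⟩) Submodule.mem_top
  have hΦη : Φ η = Φ ζ := by
    rw [hη, map_sum]
    have : ∑ j, Φ (φ j • δ j) = ∑ j, φ j • (v j - ∑ l, φ l • W j l) := by
      refine Finset.sum_congr rfl fun j _ => ?_
      rw [map_smul, hδspec j]
    rw [this, ← hsum]
    have hzero : ∑ j, ∑ l, φ j • φ l • W j l = 0 :=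
      antisym_double_sum_eq_zero φ W hWa hWd
    calc ∑ j, φ j • (v j - ∑ l, φ l • W j l)
        = ∑ j, (φ j • v j - ∑ l, φ j • φ l • W j l) := by
          refine Finset.sum_congr rfl fun j _ => ?_
          rw [smul_sub, Finset.smul_sum]
      _ = ∑ j, φ j • v j - ∑ j, ∑ l, φ j • φ l • W j l := Finset.sum_sub_distrib _ _
      _ = ∑ j, φ j • v j := by rw [hzero, sub_zero]
  have hker : ζ - η ∈ ⨅ i, LinearMap.ker (derEval R (φ i)) := by
    rw [Submodule.mem_iInf]
    intro i
    rw [LinearMap.mem_ker]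
    have hΦ0 : Φ (ζ - η) = 0 := by rw [map_sub, hΦη, sub_self]
    have := congrFun hΦ0 i.succ
    simpa [hΦ, Fin.cons_succ, derEval] using this
  have : ζ = (ζ - η) + η := by abel
  rw [this]
  exact Submodule.add_mem _ (Submodule.mem_sup_left hker) (Submodule.mem_sup_right hηmem)

/-- **Theorem (evaluation induces an isomorphism `Θ/Θᵀ ≅ df(Θ)/df(Θᵀ)`).**
Let `R` be a commutative `ℂ`-algebra, `f, φ₁, …, φ_k ∈ R`, `I = (φ₁,…,φ_k)`,
and let `N ⊆ R^{k+1}` be the image of `Der(R) → R^{k+1}`,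
`δ ↦ (δ f, δ φ₁, …, δ φ_k)`; assume `φ₁, …, φ_k` is a regular sequence on
`R^{k+1}/N`. With `Θ = {ξ : ξ φᵢ ∈ I ∀ i}` and
`Θᵀ = {η : η φ₁ = ⋯ = η φ_k = 0} + I·Der(R)`, the evaluation `ξ ↦ ξ f`
induces an `R`-module isomorphism `Θ/Θᵀ ≅ E(Θ)/E(Θᵀ)`. -/
theorem evaluation_induces_iso_theta_mod_trivial
    (R : Type) [CommRing R] [Algebra ℂ R] (k : ℕ) (f : R) (φ : Fin k → R)
    (I : Ideal R) (hI : I = Ideal.span (Set.range φ))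
    (N : Submodule R (Fin (k + 1) → R))
    (hN : N = LinearMap.range
      (LinearMap.pi fun i => derEval R ((Fin.cons f φ : Fin (k + 1) → R) i)))
    (hreg : RingTheory.Sequence.IsRegular ((Fin (k + 1) → R) ⧸ N) (List.ofFn φ))
    (Θ ΘT : Submodule R (Derivation ℂ R R))
    (hΘ : Θ = ⨅ i, Submodule.comap (derEval R (φ i)) (Submodule.restrictScalars R I))
    (hΘT : ΘT = (⨅ i, LinearMap.ker (derEval R (φ i))) ⊔
      I • (⊤ : Submodule R (Derivation ℂ R R))) :
    ∃ e : (Θ ⧸ ΘT.comap Θ.subtype) ≃ₗ[R]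
        (Θ.map (derEval R f) ⧸ (ΘT.map (derEval R f)).comap (Θ.map (derEval R f)).subtype),
      ∀ ξ : Θ,
        e (Submodule.Quotient.mk ξ) =
          Submodule.Quotient.mk
            (⟨derEval R f ξ.1, Submodule.mem_map_of_mem ξ.2⟩ : Θ.map (derEval R f)) := by
  classical
  have hΘmem : ∀ ξ : Derivation ℂ R R, ξ ∈ Θ ↔ ∀ i, ξ (φ i) ∈ I := by
    intro ξ
    rw [hΘ, Submodule.mem_iInf]
    exact forall_congr' fun i => Iff.rfl
  have hTsubΘ : ΘT ≤ Θ := by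
    rw [hΘT]
    refine sup_le ?_ ?_
    · intro ξ hξ
      rw [Submodule.mem_iInf] at hξ
      rw [hΘmem]
      intro i
      have := hξ i
      rw [LinearMap.mem_ker] at this
      show ξ (φ i) ∈ I
      have h2 : derEval R (φ i) ξ = ξ (φ i) := rfl
      rw [← h2, this]
      exact I.zero_mem
    · intro ξ hξ
      rw [hΘmem]
      intro i
      refine Submodule.smul_induction_on hξ (fun a ha x _ => ?_) (fun x y hx hy => ?_)
      · show (a • x) (φ i) ∈ I
        have : (a • x) (φ i) = a * x (φ i) := rfl
        rw [this]
        exact I.mul_mem_right _ ha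
      · show (x + y) (φ i) ∈ I
        have : (x + y) (φ i) = x (φ i) + y (φ i) := rfl
        rw [this]
        exact I.add_mem hx hy
  -- the evaluation map into the quotient
  set EΘ := Θ.map (derEval R f) with hEΘ
  set ET := ΘT.map (derEval R f) with hET
  set p := ΘT.comap Θ.subtype with hp
  set q := ET.comap EΘ.subtype with hq
  have hres : ∀ x ∈ Θ, derEval R f x ∈ EΘ := fun x hx => Submodule.mem_map_of_mem hx
  set g : Θ →ₗ[R] EΘ ⧸ q := q.mkQ ∘ₗ ((derEval R f).restrict hres) with hg
  have hgapply : ∀ ξ : Θ, g ξ = Submodule.Quotient.mk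
      (⟨derEval R f ξ.1, Submodule.mem_map_of_mem ξ.2⟩ : EΘ) := fun ξ => rfl
  have hgzero : ∀ ξ : Θ, g ξ = 0 ↔ (ξ : Derivation ℂ R R) f ∈ ET := by
    intro ξ
    rw [hgapply, Submodule.Quotient.mk_eq_zero]
    exact Iff.rfl
  have hle : p ≤ LinearMap.ker g := by
    intro ξ hξ
    rw [LinearMap.mem_ker, hgzero]
    exact Submodule.mem_map_of_mem hξ
  have hker : LinearMap.ker g ≤ p := by
    intro ξ hξ
    rw [LinearMap.mem_ker, hgzero] at hξ
    obtain ⟨η, hη, hηf⟩ := hξ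
    show (ξ : Derivation ℂ R R) ∈ ΘT
    have hζf : ((ξ : Derivation ℂ R R) - η) f = 0 := by
      have : ((ξ : Derivation ℂ R R) - η) f = (ξ : Derivation ℂ R R) f - η f := rfl
      rw [this]
      have hηf' : η f = (ξ : Derivation ℂ R R) f := hηf
      rw [hηf', sub_self]
    have hζφ : ∀ i, ((ξ : Derivation ℂ R R) - η) (φ i) ∈ Ideal.span (Set.range φ) := by
      intro i
      have h1 : (ξ : Derivation ℂ R R) (φ i) ∈ I := (hΘmem _).mp ξ.2 i
      have h2 : η (φ i) ∈ I := (hΘmem _).mp (hTsubΘ hη) i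
      have : ((ξ : Derivation ℂ R R) - η) (φ i)
          = (ξ : Derivation ℂ R R) (φ i) - η (φ i) := rfl
      rw [this, ← hI]
      exact I.sub_mem h1 h2
    have hreg' : RingTheory.Sequence.IsWeaklyRegular
        ((Fin (k + 1) → R) ⧸ LinearMap.range
          (LinearMap.pi fun i => derEval R ((Fin.cons f φ : Fin (k + 1) → R) i)))
        (List.ofFn φ) := by
      rw [← hN]; exact hreg.toIsWeaklyRegular
    have hcrux := crux R k f φ hreg' ((ξ : Derivation ℂ R R) - η) hζf hζφ
    have hmem : ((ξ : Derivation ℂ R R) - η) ∈ ΘT := by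
      rw [hΘT, hI]
      exact hcrux
    have : (ξ : Derivation ℂ R R) = ((ξ : Derivation ℂ R R) - η) + η := by abel
    rw [this]
    exact ΘT.add_mem hmem hη
  have hgsurj : Function.Surjective g := by
    intro y
    obtain ⟨z, rfl⟩ := Submodule.mkQ_surjective q y
    obtain ⟨zv, hzv⟩ := z
    obtain ⟨ξ, hξ, hξf⟩ := hzv
    refine ⟨⟨ξ, hξ⟩, ?_⟩
    rw [hgapply]
    congr 1
    exact Subtype.ext hξf
  have hinj : Function.Injective (p.liftQ g hle) := by
    rw [← LinearMap.ker_eq_bot]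
    exact Submodule.ker_liftQ_eq_bot _ _ _ hker
  have hsurj : Function.Surjective (p.liftQ g hle) := by
    intro y
    obtain ⟨x, hx⟩ := hgsurj y
    exact ⟨Submodule.Quotient.mk x, by rw [Submodule.liftQ_apply]; exact hx⟩
  refine ⟨LinearEquiv.ofBijective (p.liftQ g hle) (@id (Function.Bijective (p.liftQ g hle)) ⟨hinj, hsurj⟩), fun ξ => ?_⟩
  rw [LinearEquiv.ofBijective_apply, Submodule.liftQ_apply, hgapply]
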